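/- arXiv:1105.0456 — 2 statements merged into one kernel-verified Lean document; each statement's English description precedes it below -/
import Mathlib

section
/- Fix a real number $q$ with $0 < q < 1$ and an integer $N \ge 1$. Then the linear map $T_N : V_N \to V_{N-2}$ is injective, and the cokernel $V_{N-2}/\mathrm{Im}\, T_N$ has $\mathbb{C}$-dimension $N - 1$. -/
/-- The `q`-integer `[n] = (qⁿ - q⁻ⁿ)/(q - q⁻¹)`. -/
noncomputable def qint (q : ℝ) (n : ℤ) : ℝ :=
  (q ^ n - q ^ (-n)) / (q - q⁻¹)

/-- The index set `S_N = {(a,b) : a ≥ |N|, a ≡ N (mod 2), |b| ≤ a, b ≡ a (mod 2)}`. -/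
def SN (N : ℤ) : Set (ℤ × ℤ) :=
  {p | |N| ≤ p.1 ∧ p.1 % 2 = N % 2 ∧ |p.2| ≤ p.1 ∧ p.2 % 2 = p.1 % 2}

/-- `V_N`: the `ℂ`-vector space of finitely supported functions on `S_N`, with standard
basis `(e_{a,b})`. -/
abbrev VN (N : ℤ) : Type :=
  SN N →₀ ℂ

/-- The coefficient `√([ (a-N)/2 + 1 ] [ (a+N)/2 ])` of the Dolbeault operator. -/
noncomputable def coeffT (q : ℝ) (N : ℤ) (p : ℤ × ℤ) : ℝ :=
  Real.sqrt (qint q ((p.1 - N) / 2 + 1) * qint q ((p.1 + N) / 2))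

/-- The anti-holomorphic Dolbeault operator `T_N : V_N → V_{N-2}`,
`T_N e_{a,b} = √([ (a-N)/2 + 1 ] [ (a+N)/2 ]) e_{a,b}` if `(a,b) ∈ S_{N-2}`, and `0`
otherwise. -/
noncomputable def TN (q : ℝ) (N : ℤ) : VN N →ₗ[ℂ] VN (N - 2) :=
  Finsupp.lsum ℂ fun p : SN N =>
    letI := Classical.dec ((p : ℤ × ℤ) ∈ SN (N - 2))
    if h : (p : ℤ × ℤ) ∈ SN (N - 2) then
      ((coeffT q N p : ℝ) : ℂ) • Finsupp.lsingle (⟨(p : ℤ × ℤ), h⟩ : SN (N - 2))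
    else 0

lemma qint_pos {q : ℝ} (hq0 : 0 < q) (hq1 : q < 1) {n : ℤ} (hn : 1 ≤ n) : 0 < qint q n := by
  have hq1' : q ^ n < 1 := by
    calc q ^ n ≤ q ^ (1:ℤ) := zpow_le_zpow_right_of_le_one₀ hq0 hq1.le hn
    _ = q := zpow_one q
    _ < 1 := hq1
  have hpos : 0 < q ^ n := zpow_pos hq0 n
  have h2 : 1 < q ^ (-n) := by
    rw [zpow_neg]
    exact (one_lt_inv₀ hpos).2 hq1'
  have hd : q - q⁻¹ < 0 := by
    have : 1 < q⁻¹ := (one_lt_inv₀ hq0).2 hq1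
    linarith
  rw [qint, div_pos_iff]
  right
  constructor <;> linarith


lemma mem_SN_iff {N : ℤ} {p : ℤ × ℤ} :
    p ∈ SN N ↔ |N| ≤ p.1 ∧ p.1 % 2 = N % 2 ∧ |p.2| ≤ p.1 ∧ p.2 % 2 = p.1 % 2 := Iff.rfl

lemma mem_SN_mk {N a b : ℤ} :
    ((a, b) : ℤ × ℤ) ∈ SN N ↔ |N| ≤ a ∧ a % 2 = N % 2 ∧ |b| ≤ a ∧ b % 2 = a % 2 := Iff.rfl

lemma SN_mono {N : ℤ} (hN : 1 ≤ N) {p : ℤ × ℤ} (hp : p ∈ SN N) : p ∈ SN (N - 2) := by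
  simp only [mem_SN_iff, abs_le] at hp ⊢
  omega

open Finsupp in
open scoped Classical in
lemma TN_apply (q : ℝ) {N : ℤ} (hN : 1 ≤ N) (f : VN N) (r : SN (N - 2)) :
    TN q N f r =
      if h : (r : ℤ × ℤ) ∈ SN N then ((coeffT q N r : ℝ) : ℂ) * f ⟨(r : ℤ × ℤ), h⟩ else 0 := by
  classical
  rw [TN, Finsupp.lsum_apply, Finsupp.sum_apply]
  have step : ∀ p : SN N, ∀ x : ℂ,
      (((if h : (p : ℤ × ℤ) ∈ SN (N - 2) then
          ((coeffT q N p : ℝ) : ℂ) • Finsupp.lsingle (⟨(p : ℤ × ℤ), h⟩ : SN (N - 2))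
        else 0 : ℂ →ₗ[ℂ] VN (N - 2)) x)) r
        = if (⟨(p : ℤ × ℤ), SN_mono hN p.2⟩ : SN (N - 2)) = r
            then ((coeffT q N p : ℝ) : ℂ) * x else 0 := by
    intro p x
    rw [dif_pos (SN_mono hN p.2)]
    simp only [LinearMap.smul_apply, Finsupp.lsingle_apply, Finsupp.smul_apply, smul_eq_mul,
      Finsupp.single_apply, mul_ite, mul_zero]
  rw [show (Finsupp.sum f fun p b =>
      (((if h : (p : ℤ × ℤ) ∈ SN (N - 2) then
          ((coeffT q N p : ℝ) : ℂ) • Finsupp.lsingle (⟨(p : ℤ × ℤ), h⟩ : SN (N - 2))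
        else 0 : ℂ →ₗ[ℂ] VN (N - 2)) b)) r)
      = Finsupp.sum f fun p x =>
          if (⟨(p : ℤ × ℤ), SN_mono hN p.2⟩ : SN (N - 2)) = r
            then ((coeffT q N p : ℝ) : ℂ) * x else 0
    from Finsupp.sum_congr fun p _ => step p (f p)]
  by_cases h : (r : ℤ × ℤ) ∈ SN N
  · rw [dif_pos h]
    rw [Finsupp.sum_eq_single (⟨(r : ℤ × ℤ), h⟩ : SN N)]
    · rw [if_pos (Subtype.ext rfl)]
    · intro p _ hne
      rw [if_neg]
      intro he
      exact hne (Subtype.ext (congrArg Subtype.val he : ((p : ℤ × ℤ) = (r : ℤ × ℤ))))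
    · intro _; rw [if_pos (Subtype.ext rfl), mul_zero]
  · rw [dif_neg h]
    apply Finset.sum_eq_zero
    intro p _
    dsimp only
    rw [if_neg]
    intro he
    exact h ((congrArg Subtype.val he : ((p : ℤ × ℤ) = (r : ℤ × ℤ))) ▸ p.2)

abbrev cokIdx (N : ℤ) : Type := {p : SN (N - 2) // (p : ℤ × ℤ) ∉ SN N}

noncomputable def piN (N : ℤ) : VN (N - 2) →ₗ[ℂ] (cokIdx N →₀ ℂ) :=
  Finsupp.lsum ℂ fun p : SN (N - 2) =>
    letI := Classical.dec ((p : ℤ × ℤ) ∈ SN N)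
    if h : (p : ℤ × ℤ) ∈ SN N then 0 else Finsupp.lsingle (⟨p, h⟩ : cokIdx N)

lemma piN_apply (N : ℤ) (g : VN (N - 2)) (r : cokIdx N) : piN N g r = g r.1 := by
  classical
  rw [piN, Finsupp.lsum_apply, Finsupp.sum_apply]
  have step : ∀ p : SN (N - 2), ∀ x : ℂ,
      (((if h : (p : ℤ × ℤ) ∈ SN N then 0
          else Finsupp.lsingle (⟨p, h⟩ : cokIdx N) : ℂ →ₗ[ℂ] (cokIdx N →₀ ℂ)) x)) r
        = if p = r.1 then x else 0 := by
    intro p x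
    by_cases hp : (p : ℤ × ℤ) ∈ SN N
    · rw [dif_pos hp]
      have : ¬ p = r.1 := fun he => r.2 (he ▸ hp)
      simp [this]
    · rw [dif_neg hp]
      simp only [Finsupp.lsingle_apply, Finsupp.single_apply]
      congr 1
      simp [Subtype.ext_iff]
  rw [show (Finsupp.sum g fun p b =>
      (((if h : (p : ℤ × ℤ) ∈ SN N then 0
          else Finsupp.lsingle (⟨p, h⟩ : cokIdx N) : ℂ →ₗ[ℂ] (cokIdx N →₀ ℂ)) b)) r)
      = Finsupp.sum g fun p x => if p = r.1 then x else 0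
    from Finsupp.sum_congr fun p _ => step p (g p)]
  rw [Finsupp.sum_eq_single r.1]
  · rw [if_pos rfl]
  · intro p _ hne; rw [if_neg hne]
  · intro _; rw [if_pos rfl]

lemma piN_surj (N : ℤ) : Function.Surjective (piN N) := by
  intro u
  refine ⟨u.embDomain ⟨fun r : cokIdx N => r.1, fun a b h => Subtype.ext h⟩, ?_⟩
  ext r
  rw [piN_apply]
  exact Finsupp.embDomain_apply_self _ u r

lemma coeffT_pos {q : ℝ} (hq0 : 0 < q) (hq1 : q < 1) {N : ℤ} (hN : 1 ≤ N) {p : ℤ × ℤ}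
    (hp : p ∈ SN N) : 0 < coeffT q N p := by
  simp only [mem_SN_iff, abs_le] at hp
  refine Real.sqrt_pos.2 (mul_pos (qint_pos hq0 hq1 ?_) (qint_pos hq0 hq1 ?_)) <;> omega

lemma ker_piN (q : ℝ) {N : ℤ} (hq0 : 0 < q) (hq1 : q < 1) (hN : 1 ≤ N) :
    LinearMap.ker (piN N) = LinearMap.range (TN q N) := by
  classical
  apply le_antisymm
  · intro g hg
    rw [LinearMap.mem_ker] at hg
    have hg0 : ∀ r : SN (N - 2), (r : ℤ × ℤ) ∉ SN N → g r = 0 := by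
      intro r h
      have := congrArg (fun u => u (⟨r, h⟩ : cokIdx N)) hg
      simpa [piN_apply] using this
    set incl : SN N → SN (N - 2) := fun p => ⟨(p : ℤ × ℤ), SN_mono hN p.2⟩ with hincl
    have hinj : Set.InjOn incl (incl ⁻¹' ↑g.support) := by
      intro a _ b _ h
      apply Subtype.ext
      have h2 := congrArg Subtype.val h
      exact h2
    set g' := Finsupp.comapDomain incl g hinj with hg'
    set f : VN N := Finsupp.onFinset g'.support
      (fun p => (((coeffT q N p : ℝ) : ℂ))⁻¹ * g' p)
      (fun p hne => by
        rw [Finsupp.mem_support_iff]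
        intro h0
        exact hne (by simp only [h0, mul_zero])) with hf
    refine ⟨f, ?_⟩
    ext r
    rw [TN_apply q hN f r]
    by_cases h : (r : ℤ × ℤ) ∈ SN N
    · rw [dif_pos h]
      have hc : ((coeffT q N (r : ℤ × ℤ) : ℝ) : ℂ) ≠ 0 :=
        Complex.ofReal_ne_zero.2 (ne_of_gt (coeffT_pos hq0 hq1 hN h))
      have hfval : f ⟨(r : ℤ × ℤ), h⟩ =
          (((coeffT q N ((⟨(r : ℤ × ℤ), h⟩ : SN N) : ℤ × ℤ) : ℝ) : ℂ))⁻¹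
            * g' ⟨(r : ℤ × ℤ), h⟩ := by
        rw [hf]; exact Finsupp.onFinset_apply
      rw [hfval, hg', Finsupp.comapDomain_apply]
      rw [← mul_assoc, mul_inv_cancel₀ hc, one_mul]
    · rw [dif_neg h]
      exact (hg0 r h).symm
  · rintro _ ⟨f, rfl⟩
    rw [LinearMap.mem_ker]
    ext r
    rw [piN_apply, TN_apply q hN f r.1, dif_neg r.2]
    rfl

def cokEquiv (N : ℤ) (hN : 1 ≤ N) : cokIdx N ≃ Fin (N - 1).toNat where
  toFun r := ⟨(((r.1 : ℤ × ℤ).2 + (N - 2)) / 2).toNat, by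
    have h1 := r.1.2
    have h2 := r.2
    simp only [mem_SN_iff, abs_le] at h1 h2
    omega⟩
  invFun k := ⟨⟨(N - 2, 2 * ((k : ℕ) : ℤ) - (N - 2)), by
      have hk := k.2
      rw [mem_SN_mk, abs_le, abs_le]
      omega⟩, by
      have hk := k.2
      rw [mem_SN_mk, abs_le, abs_le]
      omega⟩
  left_inv r := by
    obtain ⟨⟨⟨a, b⟩, h1⟩, h2⟩ := r
    simp only [mem_SN_iff, abs_le] at h1 h2
    apply Subtype.ext
    apply Subtype.ext
    dsimp only
    rw [Prod.mk.injEq]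
    constructor <;> omega
  right_inv k := by
    apply Fin.ext
    have hk := k.2
    dsimp only
    omega

/-- for `0 < q < 1` and an integer `N ≥ 1`, the map `T_N : V_N → V_{N-2}` is
injective and the cokernel `V_{N-2}/Im T_N` has `ℂ`-dimension `N - 1`. -/
theorem stmt8 (q : ℝ) (hq0 : 0 < q) (hq1 : q < 1) (N : ℤ) (hN : 1 ≤ N) :
    Function.Injective (TN q N) ∧
    Module.finrank ℂ (VN (N - 2) ⧸ LinearMap.range (TN q N)) = (N - 1).toNat := by
  constructor
  · rw [injective_iff_map_eq_zero]
    intro f hf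
    ext p
    have hev := congrArg (fun u => u (⟨(p : ℤ × ℤ), SN_mono hN p.2⟩ : SN (N - 2))) hf
    rw [TN_apply q hN f _, dif_pos p.2] at hev
    have hc : ((coeffT q N (p : ℤ × ℤ) : ℝ) : ℂ) ≠ 0 :=
      Complex.ofReal_ne_zero.2 (ne_of_gt (coeffT_pos hq0 hq1 hN p.2))
    have hz : f ⟨(p : ℤ × ℤ), p.2⟩ = 0 := by
      rcases mul_eq_zero.1 hev with h | h
      · exact absurd h hc
      · exact h
    simpa using hz
  · letI : Fintype (cokIdx N) := Fintype.ofEquiv _ (cokEquiv N hN).symm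
    have e : (VN (N - 2) ⧸ LinearMap.range (TN q N)) ≃ₗ[ℂ] (cokIdx N →₀ ℂ) :=
      (Submodule.quotEquivOfEq _ _ (ker_piN q hq0 hq1 hN).symm).trans
        (LinearMap.quotKerEquivOfSurjective (piN N) (piN_surj N))
    rw [e.finrank_eq, Module.finrank_finsupp_self, Fintype.card_congr (cokEquiv N hN),
      Fintype.card_fin]
end

section
/- Fix a real number $q$ with $0 < q < 1$ and an integer $N \le 0$. Then the linear map $T_N : V_N \to V_{N-2}$ is surjective, and its kernel has $\mathbb{C}$-dimension $1 - N$ (i.e. $|N| + 1$), spanned by the basis vectors $e_{a,b}$ with $a = -N$. -/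
section Aux

variable (q : ℝ) (N : ℤ)

lemma my_qint_pos (hq0 : 0 < q) (hq1 : q < 1) {n : ℤ} (hn : 1 ≤ n) : 0 < qint q n := by
  unfold qint
  have h1 : q ^ n < q ^ (-n) :=
    zpow_lt_zpow_right_of_lt_one₀ hq0 hq1 (by omega)
  have h2 : q < q⁻¹ := lt_of_lt_of_le hq1 (le_of_lt (one_lt_inv₀ hq0 |>.mpr hq1))
  exact div_pos_of_neg_of_neg (by linarith) (by linarith)

lemma my_mem_unfold {p : ℤ × ℤ} {M : ℤ} :
    p ∈ SN M ↔ |M| ≤ p.1 ∧ p.1 % 2 = M % 2 ∧ |p.2| ≤ p.1 ∧ p.2 % 2 = p.1 % 2 :=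
  Iff.rfl

lemma my_mem_sub (hN : N ≤ 0) {p : ℤ × ℤ} (hp : p ∈ SN (N - 2)) : p ∈ SN N := by
  simp only [my_mem_unfold, abs_le] at hp ⊢
  omega

lemma my_mem_iff (hN : N ≤ 0) (p : SN N) :
    ((p : ℤ × ℤ) ∈ SN (N - 2)) ↔ (p : ℤ × ℤ).1 ≠ -N := by
  have h := p.2
  simp only [my_mem_unfold, abs_le] at h ⊢
  omega

lemma my_coeff_pos (hq0 : 0 < q) (hq1 : q < 1) (hN : N ≤ 0) {p : ℤ × ℤ}
    (hp : p ∈ SN (N - 2)) : 0 < coeffT q N p := by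
  simp only [my_mem_unfold, abs_le] at hp
  obtain ⟨h1, h2, h3, h4⟩ := hp
  unfold coeffT
  apply Real.sqrt_pos.mpr
  apply mul_pos (my_qint_pos q hq0 hq1 ?_) (my_qint_pos q hq0 hq1 ?_) <;> omega

/-- Inclusion `S_{N-2} → S_N`. -/
def my_iota (hN : N ≤ 0) (p : SN (N - 2)) : SN N :=
  ⟨(p : ℤ × ℤ), my_mem_sub N hN p.2⟩

lemma my_TN_single_pos (p : SN N) (x : ℂ) (h : (p : ℤ × ℤ) ∈ SN (N - 2)) :
    TN q N (Finsupp.single p x) =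
      Finsupp.single (⟨(p : ℤ × ℤ), h⟩ : SN (N - 2)) (((coeffT q N p : ℝ) : ℂ) * x) := by
  unfold TN
  rw [Finsupp.lsum_single]
  simp only [dif_pos h, LinearMap.smul_apply, Finsupp.lsingle_apply, Finsupp.smul_single,
    smul_eq_mul]

lemma my_TN_single_neg (p : SN N) (x : ℂ) (h : (p : ℤ × ℤ) ∉ SN (N - 2)) :
    TN q N (Finsupp.single p x) = 0 := by
  unfold TN
  rw [Finsupp.lsum_single]
  simp only [dif_neg h, LinearMap.zero_apply]

lemma my_TN_apply (hN : N ≤ 0) (v : VN N) (p' : SN (N - 2)) :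
    (TN q N v) p' = ((coeffT q N p' : ℝ) : ℂ) * v (my_iota N hN p') := by
  induction v using Finsupp.induction_linear with
  | zero => simp
  | add f g hf hg =>
    simp only [map_add, Finsupp.add_apply, hf, hg]; ring
  | single p x =>
    by_cases h : (p : ℤ × ℤ) ∈ SN (N - 2)
    · rw [my_TN_single_pos q N p x h]
      rw [Finsupp.single_apply, Finsupp.single_apply]
      by_cases he : (p : ℤ × ℤ) = (p' : ℤ × ℤ)
      · have h1 : (⟨(p : ℤ × ℤ), h⟩ : SN (N - 2)) = p' := Subtype.ext he
        have h2 : p = my_iota N hN p' := Subtype.ext he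
        rw [if_pos h1, if_pos h2, he]
      · have hA : (⟨(p : ℤ × ℤ), h⟩ : SN (N - 2)) ≠ p' :=
          fun hc => he (congrArg Subtype.val hc)
        have hB : p ≠ my_iota N hN p' := fun hc => he (congrArg Subtype.val hc)
        rw [if_neg hA, if_neg hB, mul_zero]
    · rw [my_TN_single_neg q N p x h]
      have hne : p ≠ my_iota N hN p' := by
        intro hc; exact h (hc ▸ p'.2)
      rw [Finsupp.single_apply, if_neg hne, mul_zero, Finsupp.coe_zero, Pi.zero_apply]

lemma my_coeff_ne (hq0 : 0 < q) (hq1 : q < 1) (hN : N ≤ 0) (p' : SN (N - 2)) :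
    ((coeffT q N p' : ℝ) : ℂ) ≠ 0 := by
  exact_mod_cast ne_of_gt (my_coeff_pos q N hq0 hq1 hN p'.2)

lemma my_surj (hq0 : 0 < q) (hq1 : q < 1) (hN : N ≤ 0) :
    Function.Surjective (TN q N) := by
  intro w
  induction w using Finsupp.induction_linear with
  | zero => exact ⟨0, map_zero _⟩
  | add f g hf hg =>
    obtain ⟨a, ha⟩ := hf; obtain ⟨b, hb⟩ := hg
    exact ⟨a + b, by rw [map_add, ha, hb]⟩
  | single p' x =>
    have hc := my_coeff_ne q N hq0 hq1 hN p'
    refine ⟨Finsupp.single (my_iota N hN p') (((coeffT q N p' : ℝ) : ℂ)⁻¹ * x), ?_⟩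
    rw [my_TN_single_pos q N _ _ p'.2]
    show Finsupp.single p'
        (((coeffT q N (p' : ℤ × ℤ) : ℝ) : ℂ) *
          (((coeffT q N (p' : ℤ × ℤ) : ℝ) : ℂ)⁻¹ * x)) = Finsupp.single p' x
    rw [← mul_assoc, mul_inv_cancel₀ hc, one_mul]

lemma my_ker (hq0 : 0 < q) (hq1 : q < 1) (hN : N ≤ 0) :
    LinearMap.ker (TN q N) =
      Finsupp.supported ℂ ℂ {p : SN N | (p : ℤ × ℤ).1 = -N} := by
  ext v
  rw [LinearMap.mem_ker, Finsupp.mem_supported']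
  constructor
  · intro hv p hp
    simp only [Set.mem_setOf_eq] at hp
    have hmem : (p : ℤ × ℤ) ∈ SN (N - 2) := (my_mem_iff N hN p).mpr hp
    have := my_TN_apply q N hN v ⟨(p : ℤ × ℤ), hmem⟩
    rw [hv] at this
    have hpp : my_iota N hN ⟨(p : ℤ × ℤ), hmem⟩ = p := Subtype.ext rfl
    rw [hpp] at this
    simp only [Finsupp.coe_zero, Pi.zero_apply] at this
    exact (mul_eq_zero.mp this.symm).resolve_left
      (my_coeff_ne q N hq0 hq1 hN ⟨(p : ℤ × ℤ), hmem⟩)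
  · intro hv
    ext p'
    rw [my_TN_apply q N hN v p']
    have : v (my_iota N hN p') = 0 := by
      apply hv
      simp only [Set.mem_setOf_eq]
      exact (my_mem_iff N hN (my_iota N hN p')).mp p'.2
    rw [this, mul_zero, Finsupp.coe_zero, Pi.zero_apply]

/-- The bottom row is in bijection with `Fin (1-N).toNat`. -/
def my_rowEquiv (hN : N ≤ 0) :
    {p : SN N | (p : ℤ × ℤ).1 = -N} ≃ Fin (1 - N).toNat where
  toFun ps := ⟨(((ps : SN N) : ℤ × ℤ).2 - N).toNat / 2, by
    obtain ⟨⟨⟨a, b⟩, h1, h2, h3, h4⟩, hp⟩ := ps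
    simp only [Set.mem_setOf_eq] at hp
    rw [abs_le] at h3
    simp only at hp h3 h4 ⊢
    omega⟩
  invFun k := ⟨⟨(-N, N + 2 * (k : ℤ)), by
    have hk : (k : ℕ) < (1 - N).toNat := k.isLt
    rw [my_mem_unfold, abs_of_nonpos hN, abs_le]
    simp only
    omega⟩, rfl⟩
  left_inv ps := by
    obtain ⟨⟨⟨a, b⟩, h1, h2, h3, h4⟩, hp⟩ := ps
    simp only [Set.mem_setOf_eq] at hp
    rw [abs_le] at h3
    simp only at hp h3 h4
    apply Subtype.ext
    apply Subtype.ext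
    refine Prod.ext ?_ ?_ <;> simp only <;> omega
  right_inv k := by
    apply Fin.ext
    have hk : (k : ℕ) < (1 - N).toNat := k.isLt
    simp only
    omega

lemma my_finrank (hq0 : 0 < q) (hq1 : q < 1) (hN : N ≤ 0) :
    Module.finrank ℂ (LinearMap.ker (TN q N)) = (1 - N).toNat := by
  rw [my_ker q N hq0 hq1 hN]
  let s : Set (SN N) := {p : SN N | (p : ℤ × ℤ).1 = -N}
  haveI : Fintype s := Fintype.ofEquiv _ (my_rowEquiv N hN).symm
  have e1 : (Finsupp.supported ℂ ℂ s) ≃ₗ[ℂ] (s →₀ ℂ) := Finsupp.supportedEquivFinsupp s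
  have e2 : (s →₀ ℂ) ≃ₗ[ℂ] (s → ℂ) := Finsupp.linearEquivFunOnFinite ℂ ℂ s
  rw [e1.finrank_eq, e2.finrank_eq, Module.finrank_fintype_fun_eq_card,
    Fintype.card_congr (my_rowEquiv N hN), Fintype.card_fin]

end Aux

/-- for `0 < q < 1` and an integer `N ≤ 0`, the map `T_N : V_N → V_{N-2}` is
surjective, and its kernel is spanned by the basis vectors `e_{a,b}` with `a = -N` and
has `ℂ`-dimension `1 - N = |N| + 1`. -/
theorem stmt9 (q : ℝ) (hq0 : 0 < q) (hq1 : q < 1) (N : ℤ) (hN : N ≤ 0) :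
    Function.Surjective (TN q N) ∧
    LinearMap.ker (TN q N) =
      Submodule.span ℂ
        {v : VN N | ∃ p : SN N, (p : ℤ × ℤ).1 = -N ∧ v = Finsupp.single p 1} ∧
    Module.finrank ℂ (LinearMap.ker (TN q N)) = (1 - N).toNat := by
  refine ⟨my_surj q N hq0 hq1 hN, ?_, my_finrank q N hq0 hq1 hN⟩
  rw [my_ker q N hq0 hq1 hN, Finsupp.supported_eq_span_single]
  congr 1
  ext v
  simp only [Set.mem_image, Set.mem_setOf_eq]
  constructor
  · intro ⟨p, hp, hv⟩
    exact ⟨p, hp, hv.symm⟩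
  · intro ⟨p, hp, hv⟩
    exact ⟨p, hp, hv.symm⟩
end
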